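/- If NPr^ε(λ) holds, then NPr^(ε+1)(λ⁺) holds. -/

import Mathlib

open FirstOrder Cardinal

/-- The increasing enumeration of a finite set in a linear order. -/
noncomputable def enumFun {M : Type*} [LinearOrder M] (w : Finset M) : Fin w.card → M :=
  fun i => (w.orderIsoOfFin rfl i : M)

/-- `rk(w,𝕄) ≥ 0`. -/
def rkBase (L : Language) (M : Type*) [LinearOrder M] [L.Structure M] (w : Finset M) : Prop :=
  ∀ φ : L.Formula (Fin w.card), φ.IsQF → ∀ k : Fin w.card,
    φ.Realize (enumFun w) →
      ¬ ({α : M | φ.Realize (Function.update (enumFun w) k α)}).Countable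

/-- Successor step of the splitting rank. -/
def rkSucc (L : Language) (M : Type*) [LinearOrder M] [L.Structure M]
    (IH : Finset M → Prop) (w : Finset M) : Prop :=
  ∀ φ : L.Formula (Fin w.card), φ.IsQF → ∀ k : Fin w.card,
    φ.Realize (enumFun w) →
      ∃ α : M, α ∉ w ∧ IH (insert α w) ∧ φ.Realize (Function.update (enumFun w) k α)

/-- The splitting rank relation `rk(w,𝕄) ≥ δ`. -/
noncomputable def rkGe (L : Language) (M : Type*) [LinearOrder M] [L.Structure M]
    (δ : Ordinal) : Finset M → Prop :=
  Ordinal.limitRecOn δ (rkBase L M) (fun _ IH => rkSucc L M IH)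
    (fun _ _ IH w => ∀ γ (hγ : γ < _), IH γ hγ w)

/-- `NPr^ε(λ)`: there is a model with universe of cardinality `λ` in a countable vocabulary
all of whose nonempty finite subsets `w` satisfy `1 + rk(w) ≤ ε`. -/
def NPr (ε : Ordinal) (lam : Cardinal) : Prop :=
  ∃ (M : Type) (instO : LinearOrder M) (L : FirstOrder.Language.{0, 0}) (instS : L.Structure M),
    Cardinal.mk M = lam ∧ L.card ≤ Cardinal.aleph0 ∧
    ∀ w : Finset M, w.Nonempty → ∀ δ : Ordinal, @rkGe L M instO instS δ w → 1 + δ ≤ ε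

-- ## basic rkGe lemmas
section Basic
open FirstOrder.Language

variable {L : Language} {M : Type*} [LinearOrder M] [L.Structure M]

lemma rkGe_zero : rkGe L M 0 = rkBase L M := Ordinal.limitRecOn_zero _ _ _

lemma rkGe_succ (δ : Ordinal) : rkGe L M (Order.succ δ) = rkSucc L M (rkGe L M δ) :=
  Ordinal.limitRecOn_succ _ _ _ _

lemma rkGe_limit {δ : Ordinal} (hδ : Order.IsSuccLimit δ) (w : Finset M) :
    rkGe L M δ w ↔ ∀ γ < δ, rkGe L M γ w := by
  rw [rkGe, Ordinal.limitRecOn_limit _ _ _ _ hδ]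
  exact Iff.rfl

noncomputable def topQF (L : Language) (α : Type*) : L.Formula α :=
  BoundedFormula.falsum.imp BoundedFormula.falsum

lemma topQF_isQF {α : Type*} : (topQF L α).IsQF :=
  BoundedFormula.IsQF.imp BoundedFormula.IsQF.falsum BoundedFormula.IsQF.falsum

lemma topQF_realize {α : Type*} (v : α → M) : (topQF L α).Realize v := fun h => h

lemma enumFun_mem (w : Finset M) (i : Fin w.card) : enumFun w i ∈ w :=
  (w.orderIsoOfFin rfl i).2

lemma enumFun_injective (w : Finset M) : Function.Injective (enumFun w) := fun i j h =>
  (w.orderIsoOfFin rfl).injective (Subtype.ext h)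

lemma not_rkGe_of_countable [Countable M] :
    ∀ δ : Ordinal, ∀ w : Finset M, w.Nonempty → ¬ rkGe L M δ w := by
  intro δ
  induction δ using Ordinal.induction with
  | h δ IH =>
  rcases Ordinal.zero_or_succ_or_isSuccLimit δ with rfl | ⟨γ, rfl⟩ | hlim
  · intro w hw hr
    rw [rkGe_zero] at hr
    exact hr (topQF L _) topQF_isQF ⟨0, Finset.card_pos.2 hw⟩ (topQF_realize _)
      (Set.to_countable _)
  · intro w hw hr
    rw [rkGe_succ] at hr
    obtain ⟨α, -, hr', -⟩ := hr (topQF L _) topQF_isQF ⟨0, Finset.card_pos.2 hw⟩ (topQF_realize _)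
    exact IH γ (Order.lt_succ γ) _ (Finset.insert_nonempty _ _) hr'
  · intro w hw hr
    exact IH 0 hlim.pos w hw ((rkGe_limit hlim w).1 hr 0 hlim.pos)

end Basic

-- ## the star language and structure
section Star

/-- Relation symbols: an `(n+1)`-ary symbol for each `L`-formula in `n` variables. -/
def starRel (L : FirstOrder.Language.{0,0}) : ℕ → Type
  | 0 => PEmpty
  | j + 1 => L.Formula (Fin j)

def starLang (L : FirstOrder.Language.{0,0}) : FirstOrder.Language.{0,0} :=
  ⟨fun _ => Empty, starRel L⟩

variable {L : FirstOrder.Language.{0,0}} (M : Type) [L.Structure M] (N : Type) [LinearOrder N]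

def starRelMap (E : N → N → M) : ∀ n, starRel L n → (Fin n → N) → Prop
  | 0, R, _ => R.elim
  | (j+1), ψ, v => (∀ i : Fin j, v i.castSucc < v (Fin.last j)) ∧
      Language.Formula.Realize (L := L) (M := M) ψ (fun i => E (v (Fin.last j)) (v i.castSucc))

def starStructure (E : N → N → M) : (starLang L).Structure N where
  funMap := fun f _ => f.elim
  RelMap := fun {n} R v => starRelMap M N E n R v

lemma starRelMap_succ (E : N → N → M) (j : ℕ) (ψ : L.Formula (Fin j)) (v : Fin (j+1) → N) :
    starRelMap M N E (j+1) ψ v ↔ ((∀ i : Fin j, v i.castSucc < v (Fin.last j)) ∧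
      ψ.Realize (fun i => E (v (Fin.last j)) (v i.castSucc))) := Iff.rfl

lemma starStructure_relMap (E : N → N → M) (n : ℕ) (R : (starLang L).Relations n)
    (v : Fin n → N) :
    @Language.Structure.RelMap (starLang L) N (starStructure M N E) n R v
      = starRelMap M N E n R v :=
  rfl

lemma starLang_card (hL : L.card ≤ ℵ₀) : (starLang L).card ≤ ℵ₀ := by
  have h1 : ∀ l, #(starRel L l) ≤ ℵ₀ := by
    intro l
    cases l with
    | zero => simp [starRel]
    | succ j =>
        have h2 : #(L.Formula (Fin j)) ≤ #(Σ n, L.BoundedFormula (Fin j) n) :=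
          Cardinal.mk_le_of_injective (f := fun φ => (⟨0, φ⟩ : Σ n, L.BoundedFormula (Fin j) n))
            (fun a b h => by cases h; rfl)
        refine le_trans h2 ((Language.BoundedFormula.card_le).trans ?_)
        simp only [Cardinal.lift_id, Cardinal.mk_fin]
        apply max_le le_rfl
        refine le_trans (add_le_add (le_of_lt (Cardinal.nat_lt_aleph0 j)) hL) ?_
        simp [Cardinal.aleph0_add_aleph0]
  have hfun : #(Σ l, (starLang L).Functions l) = 0 := by
    simp [starLang]
  have hrel : #(Σ l, (starLang L).Relations l) ≤ ℵ₀ := by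
    rw [Cardinal.mk_sigma]
    calc (Cardinal.sum fun l => #(starRel L l)) ≤ Cardinal.sum (fun _ : ℕ => ℵ₀) :=
          Cardinal.sum_le_sum _ _ h1
      _ = #ℕ * ℵ₀ := by rw [Cardinal.sum_const, Cardinal.lift_id, Cardinal.lift_id]
      _ ≤ ℵ₀ := by simp [Cardinal.aleph0_mul_aleph0]
  rw [Language.card, Language.Symbols, Cardinal.mk_sum, Cardinal.lift_id, Cardinal.lift_id, hfun]
  simpa using hrel

end Star

-- ## the key formula-transfer lemma
section Key
open FirstOrder.Language

variable {L : FirstOrder.Language.{0,0}} {M : Type} [LinearOrder M] [L.Structure M]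
variable {N : Type} [LinearOrder N]

lemma key (E : N → N → M)
    (w : Finset N) (b : N) (hb : b ∈ w) (htop : ∀ a ∈ w, a ≤ b)
    (w' : Finset M) (hw' : w' = (w.erase b).image (E b))
    (ψ : L.Formula (Fin w'.card))
    (k : Fin w'.card)
    (hψr : ψ.Realize (enumFun w')) :
    ∃ (φ : (starLang L).Formula (Fin w.card)) (k' : Fin w.card),
      φ.IsQF ∧
      @Formula.Realize (starLang L) N (starStructure M N E) _ φ (enumFun w) ∧
      ∀ α : N, (@Formula.Realize (starLang L) N (starStructure M N E) _ φ
          (Function.update (enumFun w) k' α) ↔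
        (α < b ∧ ψ.Realize
          (Function.update (enumFun w') k (E b α)))) := by
  classical
  letI iS : (starLang L).Structure N := starStructure M N E
  have hltb : ∀ a ∈ w.erase b, a < b := fun a ha =>
    lt_of_le_of_ne (htop a (Finset.mem_of_mem_erase ha)) (Finset.ne_of_mem_erase ha)
  have hex : ∀ j : Fin w'.card, ∃ a, a ∈ w.erase b ∧ E b a = enumFun w' j := by
    intro j
    have h3 : enumFun w' j ∈ (w.erase b).image (E b) := by
      rw [← hw']; exact enumFun_mem w' j
    exact Finset.mem_image.1 h3
  choose A hA1 hA2 using hex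
  have hAb : ∀ j, A j < b := fun j => hltb _ (hA1 j)
  have hAw : ∀ j, A j ∈ w := fun j => Finset.mem_of_mem_erase (hA1 j)
  set e := w.orderIsoOfFin rfl with he
  set pb : Fin w.card := e.symm ⟨b, hb⟩ with hpbdef
  have hpb : enumFun w pb = b := by
    simp only [enumFun, hpbdef, ← he, OrderIso.apply_symm_apply]
  set ρ : Fin w'.card → Fin w.card := fun j => e.symm ⟨A j, hAw j⟩ with hρdef
  have hρ : ∀ j, enumFun w (ρ j) = A j := fun j => by
    simp only [enumFun, hρdef, ← he, OrderIso.apply_symm_apply]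
  have hρ_ne : ∀ j, ρ j ≠ pb := by
    intro j hj
    have : A j = b := by rw [← hρ j, hj, hpb]
    exact absurd (this ▸ hAb j) (lt_irrefl b)
  have hρ_inj : Function.Injective ρ := by
    intro i j hij
    have hAij : A i = A j := by rw [← hρ i, ← hρ j, hij]
    have : enumFun w' i = enumFun w' j := by rw [← hA2 i, ← hA2 j, hAij]
    exact enumFun_injective w' this
  -- the star formula
  let R : (starLang L).Relations (w'.card + 1) := ψ
  let ts : Fin (w'.card + 1) → (starLang L).Term (Fin w.card) :=
    fun i => Term.var ((Fin.snoc ρ pb : Fin (w'.card+1) → Fin w.card) i)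
  refine ⟨Relations.formula R ts, ρ k, ?_, ?_, ?_⟩
  · exact (BoundedFormula.IsAtomic.rel R _).isQF
  · rw [Formula.realize_rel]
    rw [starStructure_relMap, starRelMap_succ]
    constructor
    · intro i
      simp only [ts, Term.realize_var, Fin.snoc_castSucc, Fin.snoc_last, hρ, hpb]
      exact hAb i
    · have : (fun i => E ((fun i => Term.realize (enumFun w) (ts i)) (Fin.last w'.card))
          ((fun i => Term.realize (enumFun w) (ts i)) i.castSucc)) = enumFun w' := by
        funext i
        simp only [ts, Term.realize_var, Fin.snoc_castSucc, Fin.snoc_last, hρ, hpb]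
        exact hA2 i
      rw [this]
      exact hψr
  · intro α
    set u := Function.update (enumFun w) (ρ k) α with hu
    have hupb : u pb = b := by
      rw [hu, Function.update_of_ne (Ne.symm (hρ_ne k)), hpb]
    have huρ : ∀ i, u (ρ i) = if i = k then α else A i := by
      intro i
      by_cases hik : i = k
      · subst hik; simp [hu]
      · rw [hu, Function.update_of_ne (fun hc => hik (hρ_inj hc)), hρ]
        simp [hik]
    rw [Formula.realize_rel]
    rw [starStructure_relMap, starRelMap_succ]
    simp only [ts, Term.realize_var, Fin.snoc_castSucc, Fin.snoc_last]
    constructor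
    · rintro ⟨h1, h2⟩
      have hα : α < b := by
        have := h1 k
        rwa [huρ k, if_pos rfl, hupb] at this
      refine ⟨hα, ?_⟩
      have : (fun i => E (u pb) (u (ρ i))) = Function.update (enumFun w') k (E b α) := by
        funext i
        rw [hupb, huρ i]
        by_cases hik : i = k
        · subst hik; simp
        · rw [if_neg hik, Function.update_of_ne hik, hA2]
      rw [this] at h2
      exact h2
    · rintro ⟨hα, h2⟩
      constructor
      · intro i
        rw [huρ i, hupb]
        by_cases hik : i = k
        · rw [if_pos hik]; exact hα
        · rw [if_neg hik]; exact hAb i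
      · have : (fun i => E (u pb) (u (ρ i))) = Function.update (enumFun w') k (E b α) := by
          funext i
          rw [hupb, huρ i]
          by_cases hik : i = k
          · subst hik; simp
          · rw [if_neg hik, Function.update_of_ne hik, hA2]
        rw [this]
        exact h2

end Key

lemma hltb_aux {N : Type} [LinearOrder N] (w : Finset N) (b : N) (htop : ∀ a ∈ w, a ≤ b)
    {a : N} (ha : a ∈ w.erase b) : a < b :=
  lt_of_le_of_ne (htop a (Finset.mem_of_mem_erase ha)) (Finset.ne_of_mem_erase ha)

-- ## rank transfer
section Transfer
open FirstOrder.Language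

variable {L : FirstOrder.Language.{0,0}} {M : Type} [LinearOrder M] [L.Structure M]
variable {N : Type} [LinearOrder N]

lemma transfer (E : N → N → M) (hE : ∀ b : N, Set.InjOn (E b) {x | x < b}) :
    ∀ δ : Ordinal, ∀ w : Finset N, ∀ b : N, b ∈ w → (∀ a ∈ w, a ≤ b) → (w.erase b).Nonempty →
      @rkGe (starLang L) N _ (starStructure M N E) δ w →
      rkGe L M δ ((w.erase b).image (E b)) := by
  letI iS : (starLang L).Structure N := starStructure M N E
  intro δ
  induction δ using Ordinal.induction with
  | h δ IH =>
  intro w b hb htop hne hr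
  have hEw : Set.InjOn (E b) ↑(w.erase b) := (hE b).mono (fun a ha => by
    simpa using hltb_aux w b htop ha)
  rcases Ordinal.zero_or_succ_or_isSuccLimit δ with rfl | ⟨γ, rfl⟩ | hlim
  · -- base case
    rw [rkGe_zero] at hr ⊢
    intro ψ hψqf k hψr hT
    obtain ⟨φ, k', hqf, hreal, hiff⟩ := key E w b hb htop _ rfl ψ k hψr
    refine hr φ hqf k' hreal ?_
    have hsub : {α : N | @Formula.Realize (starLang L) N (starStructure M N E) _ φ
        (Function.update (enumFun w) k' α)} ⊆ {x | x < b} := by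
      intro α hα
      exact ((hiff α).1 hα).1
    refine Set.countable_of_injective_of_countable_image ((hE b).mono hsub) ?_
    refine hT.mono ?_
    rintro β ⟨α, hα, rfl⟩
    exact ((hiff α).1 hα).2
  · -- successor case
    rw [rkGe_succ] at hr ⊢
    intro ψ hψqf k hψr
    obtain ⟨φ, k', hqf, hreal, hiff⟩ := key E w b hb htop _ rfl ψ k hψr
    obtain ⟨α, hαw, hr', hφu⟩ := hr φ hqf k' hreal
    obtain ⟨hαb, hψu⟩ := (hiff α).1 hφu
    have hαne : α ≠ b := ne_of_lt hαb
    refine ⟨E b α, ?_, ?_, hψu⟩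
    · intro hmem
      obtain ⟨a, ha, hEa⟩ := Finset.mem_image.1 hmem
      have : α = a := hE b hαb (hltb_aux w b htop ha) hEa.symm
      exact hαw (this ▸ Finset.mem_of_mem_erase ha)
    · have h5 := IH γ (Order.lt_succ γ) (insert α w) b (Finset.mem_insert_of_mem hb)
        (fun a ha => by
          rcases Finset.mem_insert.1 ha with rfl | ha
          · exact le_of_lt hαb
          · exact htop a ha)
        ⟨α, Finset.mem_erase.2 ⟨hαne, Finset.mem_insert_self _ _⟩⟩ hr'
      rwa [Finset.erase_insert_of_ne hαne, Finset.image_insert] at h5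
  · -- limit case
    rw [rkGe_limit hlim] at hr ⊢
    intro γ hγ
    exact IH γ hγ w b hb htop hne (hr γ hγ)

end Transfer


/-- If `NPr^ε(λ)` holds, then `NPr^(ε+1)(λ⁺)` holds. -/
theorem stmt_7 (ε : Ordinal) (lam : Cardinal) (h : NPr ε lam) :
    NPr (ε + 1) (Order.succ lam) := by
  classical
  obtain ⟨M, instO, L, instS, hMcard, hLcard, hbound⟩ := h
  by_cases h0 : lam = 0
  · subst h0
    letI iP : Language.empty.Structure PUnit := Language.emptyStructure
    refine ⟨PUnit, inferInstance, Language.empty, iP, ?_, ?_, ?_⟩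
    · rw [Cardinal.succ_zero]; exact Cardinal.mk_punit
    · have he : (Language.empty.card : Cardinal) = 0 := Cardinal.mk_eq_zero _
      rw [he]; exact le_of_lt Cardinal.aleph0_pos
    · intro w hw δ hr
      exact absurd hr (not_rkGe_of_countable δ w hw)
  · haveI hMne : Nonempty M := Cardinal.mk_ne_zero_iff.1 (by rw [hMcard]; exact h0)
    set N := (Order.succ lam).ord.ToType with hN
    have hEex : ∀ b : N, ∃ g : N → M, Set.InjOn g {x | x < b} := by
      intro b
      have h1 : #(Set.Iio b) ≤ #M := by
        rw [hMcard]
        exact Order.lt_succ_iff.1 (Cardinal.mk_Iio_ord_toType b)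
      obtain ⟨f⟩ := (Cardinal.le_def _ _).1 h1
      refine ⟨fun x => if hx : x < b then f ⟨x, hx⟩ else Classical.arbitrary M, ?_⟩
      intro x hx y hy hxy
      simp only [Set.mem_setOf_eq] at hx hy
      simp only [dif_pos hx, dif_pos hy] at hxy
      exact congrArg Subtype.val (f.injective hxy)
    choose E hE using hEex
    letI iS : (starLang L).Structure N := starStructure M N E
    refine ⟨N, inferInstance, starLang L, iS, ?_, starLang_card hLcard, ?_⟩
    · rw [hN, Cardinal.mk_toType, Cardinal.card_ord]
    · have boundBig : ∀ δ : Ordinal, ∀ w : Finset N, 2 ≤ w.card →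
          @rkGe (starLang L) N _ iS δ w → 1 + δ ≤ ε := by
        intro δ w h2 hr
        have hwne : w.Nonempty := Finset.card_pos.1 (by omega)
        have hb := w.max'_mem hwne
        have htop : ∀ a ∈ w, a ≤ w.max' hwne := fun a ha => w.le_max' a ha
        have hne : ((w.erase (w.max' hwne))).Nonempty := Finset.card_pos.1 (by
          rw [Finset.card_erase_of_mem hb]; omega)
        have h5 := transfer E hE δ w (w.max' hwne) hb htop hne hr
        exact hbound _ (hne.image _) δ h5
      intro w hw δ
      induction δ using Ordinal.induction with
      | h δ IH =>
      intro hr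
      rcases Ordinal.zero_or_succ_or_isSuccLimit δ with rfl | ⟨γ, rfl⟩ | hlim
      · rw [add_zero]
        calc (1 : Ordinal) = 0 + 1 := by rw [zero_add]
          _ ≤ ε + 1 := add_le_add_left (zero_le (a := ε)) 1
      · rw [rkGe_succ] at hr
        obtain ⟨α, hα, hr', -⟩ := hr (topQF _ _) topQF_isQF ⟨0, Finset.card_pos.2 hw⟩
          (topQF_realize _)
        have h2 : 2 ≤ (insert α w).card := by
          rw [Finset.card_insert_of_notMem hα]
          have := Finset.card_pos.2 hw
          omega
        have h6 : 1 + γ ≤ ε := boundBig γ (insert α w) h2 hr'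
        rw [Ordinal.add_succ, Ordinal.add_one_eq_succ]
        exact Order.succ_le_succ h6
      · refine (Ordinal.add_le_iff_of_isSuccLimit hlim).2 ?_
        intro γ hγ
        exact IH γ hγ ((rkGe_limit hlim w).1 hr γ hγ)
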